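/- Let g ∈ ℝ³ be nonzero. For R ∈ SO(3), p, v ∈ ℝ³, define the 9×4 matrix N(R,p,v) with block rows [0₃ₓ₃, −Rᵀg], [I₃, [p]×g], [0₃ₓ₃, [v]×g]. Define the 9×9 block matrix T(R,p,v) with block rows [R, 0, 0], [[p]×R, I₃, 0], [[v]×R, 0, I₃]. Then T(R,p,v) · N(R,p,v) = N₀, where N₀ is the constant matrix with block rows [0₃ₓ₃, −g], [I₃, 0], [0₃ₓ₃, 0]. -/

import Mathlib

open Matrix

/-- Skew-symmetric cross-product matrix [x]×. -/
def skew (x : Fin 3 → ℝ) : Matrix (Fin 3) (Fin 3) ℝ :=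
  !![0, -x 2, x 1; x 2, 0, -x 0; -x 1, x 0, 0]

/-- A 3-vector viewed as a one-column matrix. -/
def col1 (x : Fin 3 → ℝ) : Matrix (Fin 3) Unit ℝ :=
  Matrix.of fun i _ => x i

/-- The 9×4 unobservable-subspace basis N(R,p,v) with block rows
[0, −Rᵀg], [I₃, [p]×g], [0, [v]×g]. -/
def Nmat (g : Fin 3 → ℝ) (R : Matrix (Fin 3) (Fin 3) ℝ) (p v : Fin 3 → ℝ) :
    Matrix (Fin 3 ⊕ (Fin 3 ⊕ Fin 3)) (Fin 3 ⊕ Unit) ℝ :=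
  Matrix.fromBlocks 0 (col1 (-(Rᵀ *ᵥ g)))
    (Matrix.fromRows 1 0) (Matrix.fromRows (col1 (skew p *ᵥ g)) (col1 (skew v *ᵥ g)))

/-- The 9×9 auxiliary transformation T(R,p,v) with block rows
[R,0,0], [[p]×R, I₃, 0], [[v]×R, 0, I₃]. -/
def Tmat (R : Matrix (Fin 3) (Fin 3) ℝ) (p v : Fin 3 → ℝ) :
    Matrix (Fin 3 ⊕ (Fin 3 ⊕ Fin 3)) (Fin 3 ⊕ (Fin 3 ⊕ Fin 3)) ℝ :=
  Matrix.fromBlocks R 0 (Matrix.fromRows (skew p * R) (skew v * R)) 1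

lemma mul_col1 (M : Matrix (Fin 3) (Fin 3) ℝ) (x : Fin 3 → ℝ) :
    M * col1 x = col1 (M *ᵥ x) := by
  ext i j
  simp [col1, Matrix.mul_apply, Matrix.mulVec, dotProduct]

lemma fromRows_add' {n : Type*} (A B C D : Matrix (Fin 3) n ℝ) :
    Matrix.fromRows A B + Matrix.fromRows C D = Matrix.fromRows (A + C) (B + D) := by
  ext i j; cases i <;> rfl

lemma col1_add (x y : Fin 3 → ℝ) : col1 x + col1 y = col1 (x + y) := by
  ext i j; simp [col1]

/-- T(R,p,v) · N(R,p,v) = N₀, the constant matrix with block rows [0,−g],[I₃,0],[0,0]. -/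
theorem stmt10 (g : Fin 3 → ℝ) (R : Matrix (Fin 3) (Fin 3) ℝ)
    (hR : Rᵀ * R = 1) (hdet : R.det = 1) (p v : Fin 3 → ℝ) :
    Tmat R p v * Nmat g R p v
      = Matrix.fromBlocks 0 (col1 (-g)) (Matrix.fromRows 1 0)
          (Matrix.fromRows (col1 0) (col1 0)) := by
  have hRR' : R * Rᵀ = 1 := mul_eq_one_comm.mp hR
  have hback : ∀ x : Fin 3 → ℝ, R *ᵥ (Rᵀ *ᵥ x) = x := by
    intro x; rw [Matrix.mulVec_mulVec, hRR', Matrix.one_mulVec]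
  have h12 : R * col1 (-(Rᵀ *ᵥ g)) = col1 (-g) := by
    rw [mul_col1, Matrix.mulVec_neg, hback]
  have key : ∀ w : Fin 3 → ℝ, skew w * R * col1 (-(Rᵀ *ᵥ g)) + col1 (skew w *ᵥ g)
      = col1 0 := by
    intro w
    rw [Matrix.mul_assoc, h12, mul_col1, col1_add]
    congr 1
    simp [Matrix.mulVec_neg]
  have h22 : Matrix.fromRows (skew p * R * col1 (-(Rᵀ *ᵥ g))) (skew v * R * col1 (-(Rᵀ *ᵥ g)))
      + Matrix.fromRows (col1 (skew p *ᵥ g)) (col1 (skew v *ᵥ g))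
      = Matrix.fromRows (col1 (0 : Fin 3 → ℝ)) (col1 0) := by
    rw [fromRows_add', key p, key v]
  unfold Tmat Nmat
  rw [Matrix.fromBlocks_multiply]
  simp [h12, h22]
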